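/- arXiv:1408.6973 — 3 statements merged into one kernel-verified Lean document; each statement's English description precedes it below -/
import Mathlib

section
/- If β is a nonsingular symmetric n×n real matrix and there exists N* with N*_i > 0 for all i such that K = β N*, and if the equilibrium N* of the Lotka-Volterra system is locally asymptotically stable, then β is positive definite. -/
open Matrix

/-- Congruence by an invertible matrix preserves positive definiteness. -/
lemma posDef_conj_aux {m : Type*} [Fintype m] [DecidableEq m]
    {A B : Matrix m m ℝ} (hA : A.PosDef) (hB : IsUnit B) :
    (Bᴴ * A * B).PosDef := by
  refine Matrix.PosDef.of_dotProduct_mulVec_pos (Matrix.isHermitian_conjTranspose_mul_mul B hA.1) fun x hx => ?_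
  have hinj := Matrix.mulVec_injective_iff_isUnit.mpr hB
  have hBx : B *ᵥ x ≠ 0 := fun h => hx (hinj (h.trans (Matrix.mulVec_zero B).symm))
  simpa only [star_mulVec, dotProduct_mulVec, vecMul_vecMul] using hA.dotProduct_mulVec_pos hBx

/-- A real symmetric matrix with positive eigenvalues is positive definite. -/
lemma posDef_of_eigenvalues_pos_aux {m : Type*} [Fintype m] [DecidableEq m]
    {A : Matrix m m ℝ} (hA : A.IsHermitian) (h : ∀ i, 0 < hA.eigenvalues i) :
    A.PosDef := by
  have hd : (Matrix.diagonal (RCLike.ofReal ∘ hA.eigenvalues) : Matrix m m ℝ).PosDef :=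
    Matrix.PosDef.diagonal fun i => by simpa using h i
  have hu : IsUnit (star (hA.eigenvectorUnitary : Matrix m m ℝ)) :=
    isUnit_star.mpr ⟨Unitary.toUnits hA.eigenvectorUnitary, rfl⟩
  have := posDef_conj_aux hd hu
  rw [hA.spectral_theorem]
  simpa [Matrix.star_eq_conjTranspose, Matrix.conjTranspose_conjTranspose] using this

/-- A real spectral value maps to a complex spectral value of the complexified matrix. -/
lemma ofReal_mem_spectrum_aux {m : Type*} [Fintype m] [DecidableEq m]
    {A : Matrix m m ℝ} {t : ℝ} (ht : t ∈ spectrum ℝ A) :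
    (t : ℂ) ∈ spectrum ℂ (A.map (fun x => (x : ℂ))) := by
  rw [spectrum.mem_iff] at ht ⊢
  have hdet : (algebraMap ℝ (Matrix m m ℝ) t - A).det = 0 := by
    by_contra h
    exact ht (Matrix.isUnit_iff_isUnit_det _ |>.mpr (isUnit_iff_ne_zero.mpr h))
  have key : algebraMap ℂ (Matrix m m ℂ) (t : ℂ) - A.map (fun x => (x : ℂ))
      = (algebraMap ℝ (Matrix m m ℝ) t - A).map Complex.ofRealHom := by
    ext i j
    simp only [Matrix.sub_apply, Matrix.map_apply, Matrix.algebraMap_matrix_apply]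
    split_ifs <;> simp
  have h2 : (((algebraMap ℝ (Matrix m m ℝ)) t - A).map ⇑Complex.ofRealHom).det = 0 := by
    rw [show (((algebraMap ℝ (Matrix m m ℝ)) t - A).map ⇑Complex.ofRealHom)
        = Complex.ofRealHom.mapMatrix ((algebraMap ℝ (Matrix m m ℝ)) t - A) from rfl,
      ← RingHom.map_det, hdet, map_zero]
  rw [key, Matrix.isUnit_iff_isUnit_det, h2]
  simp

/-- If `β` is symmetric and nonsingular, there is a strictly positive equilibrium
`N*` with `K = β N*`, and the equilibrium is locally asymptotically stable
(all eigenvalues of the Jacobian `J = -D(a) β`, `a_i = (r_i/K_i) N*_i`, have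
strictly negative real part), then `β` is positive definite. -/
theorem stability_implies_posDef {n : ℕ} (β : Matrix (Fin n) (Fin n) ℝ)
    (hH : β.IsHermitian) (hns : IsUnit β.det)
    (r K Nstar : Fin n → ℝ)
    (hr : ∀ i, 0 < r i) (hK : ∀ i, 0 < K i) (hNs : ∀ i, 0 < Nstar i)
    (heq : β.mulVec Nstar = K)
    (hstab : ∀ μ : ℂ,
      μ ∈ spectrum ℂ
        (((-(Matrix.diagonal fun i => r i / K i * Nstar i)) * β).map (fun x => (x : ℂ))) →
      μ.re < 0) :
    β.PosDef := by
  classical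
  set a : Fin n → ℝ := fun i => r i / K i * Nstar i with ha
  have hapos : ∀ i, 0 < a i := fun i => mul_pos (div_pos (hr i) (hK i)) (hNs i)
  set s : Fin n → ℝ := fun i => Real.sqrt (a i) with hsdef
  have hs : ∀ i, 0 < s i := fun i => Real.sqrt_pos.mpr (hapos i)
  set S : Matrix (Fin n) (Fin n) ℝ := Matrix.diagonal s with hSdef
  set T : Matrix (Fin n) (Fin n) ℝ := Matrix.diagonal (fun i => (s i)⁻¹) with hTdef
  have hST : S * T = 1 := by
    rw [hSdef, hTdef, Matrix.diagonal_mul_diagonal,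
      show (fun i => s i * (s i)⁻¹) = fun _ : Fin n => (1 : ℝ) from
        funext fun i => mul_inv_cancel₀ (hs i).ne', Matrix.diagonal_one]
  have hTS : T * S = 1 := by
    rw [hSdef, hTdef, Matrix.diagonal_mul_diagonal,
      show (fun i => (s i)⁻¹ * s i) = fun _ : Fin n => (1 : ℝ) from
        funext fun i => inv_mul_cancel₀ (hs i).ne', Matrix.diagonal_one]
  have hSS : S * S = Matrix.diagonal a := by
    rw [hSdef, Matrix.diagonal_mul_diagonal,
      show (fun i => s i * s i) = a from funext fun i => Real.mul_self_sqrt (hapos i).le]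
  set M : Matrix (Fin n) (Fin n) ℝ := S * β * S with hMdef
  have hSh : Sᴴ = S := by
    rw [hSdef, Matrix.diagonal_conjTranspose]
    congr 1
  have hTh : Tᴴ = T := by
    rw [hTdef, Matrix.diagonal_conjTranspose]
    congr 1
  have hM : M.IsHermitian := by
    show Mᴴ = M
    rw [hMdef, Matrix.conjTranspose_mul, Matrix.conjTranspose_mul, hSh, hH.eq, mul_assoc]
  -- complexification ring hom
  have hco : (fun x : ℝ => (x : ℂ)) = ⇑Complex.ofRealHom := rfl
  have hmapST : (S.map (fun x : ℝ => (x : ℂ))) * (T.map (fun x : ℝ => (x : ℂ))) = 1 := by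
    rw [hco, ← Matrix.map_mul, hST]
    exact Matrix.map_one _ (map_zero _) (map_one _)
  have hmapTS : (T.map (fun x : ℝ => (x : ℂ))) * (S.map (fun x : ℝ => (x : ℂ))) = 1 := by
    rw [hco, ← Matrix.map_mul, hTS]
    exact Matrix.map_one _ (map_zero _) (map_one _)
  let u : (Matrix (Fin n) (Fin n) ℂ)ˣ :=
    ⟨S.map (fun x : ℝ => (x : ℂ)), T.map (fun x : ℝ => (x : ℂ)), hmapST, hmapTS⟩
  have heig : ∀ i, 0 < hM.eigenvalues i := by
    intro i
    set t := hM.eigenvalues i with htdef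
    have h1 : t ∈ spectrum ℝ M := hM.eigenvalues_mem_spectrum_real i
    have h2 : (t : ℂ) ∈ spectrum ℂ (M.map (fun x => (x : ℂ))) := ofReal_mem_spectrum_aux h1
    have hSMT : S * M * T = Matrix.diagonal a * β := by
      rw [hMdef]
      calc S * (S * β * S) * T = (S * S) * β * (S * T) := by
            simp only [mul_assoc]
        _ = Matrix.diagonal a * β := by rw [hSS, hST, mul_one]
    have hconj : (Matrix.diagonal a * β).map ⇑Complex.ofRealHom
        = (S.map ⇑Complex.ofRealHom) * (M.map ⇑Complex.ofRealHom)
          * (T.map ⇑Complex.ofRealHom) := by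
      rw [← Matrix.map_mul, ← Matrix.map_mul, hSMT]
    have hspec : spectrum ℂ ((S.map ⇑Complex.ofRealHom) * (M.map ⇑Complex.ofRealHom)
          * (T.map ⇑Complex.ofRealHom)) = spectrum ℂ (M.map ⇑Complex.ofRealHom) :=
      spectrum.units_conjugate (R := ℂ) (a := M.map ⇑Complex.ofRealHom) (u := u)
    have h2' : (t : ℂ) ∈ spectrum ℂ (M.map ⇑Complex.ofRealHom) := h2
    have h3 : (t : ℂ) ∈ spectrum ℂ ((Matrix.diagonal a * β).map ⇑Complex.ofRealHom) := by
      rw [hconj, hspec]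
      exact h2'
    have hnegmap : ((-(Matrix.diagonal a)) * β).map ⇑Complex.ofRealHom
        = -((Matrix.diagonal a * β).map ⇑Complex.ofRealHom) := by
      ext i j
      simp [Matrix.neg_mul]
    have h4 : (-(t : ℂ)) ∈ spectrum ℂ
        (((-(Matrix.diagonal a)) * β).map ⇑Complex.ofRealHom) := by
      rw [hnegmap, ← spectrum.neg_eq]
      exact Set.neg_mem_neg.mpr h3
    have h5 := hstab (-(t : ℂ)) h4
    simp only [Complex.neg_re, Complex.ofReal_re, neg_neg, neg_lt_zero] at h5
    exact h5
  have hMpos : M.PosDef := posDef_of_eigenvalues_pos_aux hM heig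
  have hβ : β = Tᴴ * M * T := by
    rw [hTh, hMdef]
    calc β = (T * S) * β * (S * T) := by rw [hTS, hST, one_mul, mul_one]
      _ = T * (S * β * S) * T := by simp only [mul_assoc]
  rw [hβ]
  exact posDef_conj_aux hMpos ⟨⟨T, S, hTS, hST⟩, rfl⟩
end

section
/- Let β be a symmetric positive definite n×n real matrix with β_ii = 1, and suppose there exists N* with N*_i > 0 and K = β N*. Then the function V(N) = Σ_i d_i (N_i - N*_i - N*_i log(N_i/N*_i)) with d_i = K_i/r_i > 0 satisfies: V(N) ≥ 0 on the strictly positive orthant, V(N) = 0 iff N = N*, and dV/dt along trajectories of the Lotka-Volterra system equals -Σ_{i,j} N_i' β_ij N_j' where N'_i = N_i - N*_i... in particular dV/dt < 0 whenever N ≠ N* in the strictly positive orthant. -/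
/-- Goh's Lyapunov function for the Lotka-Volterra competition system with a
symmetric positive definite competition matrix: `V ≥ 0` on the positive orthant,
`V = 0` iff `N = N*`, the derivative along trajectories equals the negative
quadratic form, and it is strictly negative away from `N*`. -/
theorem lv_lyapunov_function {n : ℕ} (β : Matrix (Fin n) (Fin n) ℝ)
    (hH : β.IsHermitian) (hpd : β.PosDef) (hdiag : ∀ i, β i i = 1)
    (r K Nstar : Fin n → ℝ)
    (hr : ∀ i, 0 < r i) (hK : ∀ i, 0 < K i) (hNs : ∀ i, 0 < Nstar i)
    (heq : β.mulVec Nstar = K) :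
    let d : Fin n → ℝ := fun i => K i / r i
    let V : (Fin n → ℝ) → ℝ := fun N =>
      ∑ i, d i * (N i - Nstar i - Nstar i * Real.log (N i / Nstar i))
    (∀ i, 0 < d i) ∧
    (∀ N : Fin n → ℝ, (∀ i, 0 < N i) → 0 ≤ V N) ∧
    (∀ N : Fin n → ℝ, (∀ i, 0 < N i) → (V N = 0 ↔ N = Nstar)) ∧
    (∀ N : Fin n → ℝ,
      ∑ i, d i * (r i / K i) * (N i - Nstar i) * (K i - ∑ j, β i j * N j)
        = -∑ i, ∑ j, (N i - Nstar i) * β i j * (N j - Nstar j)) ∧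
    (∀ N : Fin n → ℝ, (∀ i, 0 < N i) → N ≠ Nstar →
      ∑ i, d i * (r i / K i) * (N i - Nstar i) * (K i - ∑ j, β i j * N j) < 0) := by
  intro d V
  have hd : ∀ i, 0 < d i := fun i => div_pos (hK i) (hr i)
  have hterm : ∀ x a : ℝ, 0 < x → 0 < a → 0 ≤ x - a - a * Real.log (x / a) := by
    intro x a hx ha
    have h := Real.log_le_sub_one_of_pos (div_pos hx ha)
    have h2 := mul_le_mul_of_nonneg_left h ha.le
    have h3 : a * (x / a - 1) = x - a := by field_simp
    linarith [h3 ▸ h2]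
  have htermstrict : ∀ x a : ℝ, 0 < x → 0 < a → x ≠ a →
      0 < x - a - a * Real.log (x / a) := by
    intro x a hx ha hne
    have hne1 : x / a ≠ 1 := by
      intro h1
      exact hne (by field_simp at h1; linarith)
    have h := Real.log_lt_sub_one_of_pos (div_pos hx ha) hne1
    have h2 := mul_lt_mul_of_pos_left h ha
    have h3 : a * (x / a - 1) = x - a := by field_simp
    linarith [h3 ▸ h2]
  have hVnn : ∀ N : Fin n → ℝ, (∀ i, 0 < N i) → 0 ≤ V N := by
    intro N hN
    exact Finset.sum_nonneg fun i _ =>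
      mul_nonneg (hd i).le (hterm _ _ (hN i) (hNs i))
  have hd1 : ∀ i, d i * (r i / K i) = 1 := by
    intro i
    show K i / r i * (r i / K i) = 1
    rw [div_mul_div_comm, mul_comm (K i), div_self (mul_pos (hr i) (hK i)).ne']
  have hKi : ∀ i, K i = ∑ j, β i j * Nstar j := by
    intro i
    rw [← heq]
    simp [Matrix.mulVec, dotProduct]
  have hderiv : ∀ N : Fin n → ℝ,
      ∑ i, d i * (r i / K i) * (N i - Nstar i) * (K i - ∑ j, β i j * N j)
        = -∑ i, ∑ j, (N i - Nstar i) * β i j * (N j - Nstar j) := by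
    intro N
    rw [← Finset.sum_neg_distrib]
    refine Finset.sum_congr rfl fun i _ => ?_
    rw [hd1 i, one_mul, hKi i, ← Finset.sum_neg_distrib, ← Finset.sum_sub_distrib,
      Finset.mul_sum]
    exact Finset.sum_congr rfl fun j _ => by ring
  refine ⟨hd, hVnn, ?_, hderiv, ?_⟩
  · intro N hN
    constructor
    · intro hV
      have hz := (Finset.sum_eq_zero_iff_of_nonneg fun i _ =>
        mul_nonneg (hd i).le (hterm _ _ (hN i) (hNs i))).mp hV
      funext i
      by_contra hne
      have := htermstrict (N i) (Nstar i) (hN i) (hNs i) hne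
      have h0 := hz i (Finset.mem_univ i)
      nlinarith [hd i]
    · intro h
      rw [h]
      show ∑ i, d i * (Nstar i - Nstar i - Nstar i * Real.log (Nstar i / Nstar i)) = 0
      refine Finset.sum_eq_zero fun i _ => ?_
      rw [div_self (hNs i).ne', Real.log_one]
      ring
  · intro N hN hne
    rw [hderiv N, neg_lt_zero]
    have hx : (fun i => N i - Nstar i) ≠ 0 := by
      intro h
      apply hne
      funext i
      have := congrFun h i
      simpa [sub_eq_zero] using this
    have hpos := hpd.dotProduct_mulVec_pos (x := fun i => N i - Nstar i) hx
    have h2 : (0:ℝ) < ∑ i, (N i - Nstar i) * ∑ j, β i j * (N j - Nstar j) := by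
      simpa [dotProduct, Matrix.mulVec] using hpos
    refine lt_of_lt_of_eq h2 ?_
    refine Finset.sum_congr rfl fun i _ => ?_
    rw [Finset.mul_sum]
    exact Finset.sum_congr rfl fun j _ => by ring
end

section
/- In the mean-field case β = (1-μ)I + μJ with 0 ≤ μ < 1, a carrying capacity vector K with K_i > 0 yields a strictly positive equilibrium N* = β^{-1} K if and only if for every i: (1 + (n-2)μ) K_i > μ Σ_{j≠i} K_j. In particular, if η denotes the deviation of K from the all-ones structural vector, sufficiently small η guarantees feasibility, and the feasible range shrinks as μ → 1. -/
lemma mf_inv {n : ℕ} {m : ℝ} (hm1 : m < 1) (hd : (1 + ((n:ℝ)-1)*m) ≠ 0) :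
    ((1 - m) • (1 : Matrix (Fin n) (Fin n) ℝ) + m • (Matrix.of fun _ _ => (1:ℝ)))⁻¹
    = (1/(1-m)) • ((1 : Matrix (Fin n) (Fin n) ℝ)
        - (m/(1 + ((n:ℝ)-1)*m)) • (Matrix.of fun _ _ => (1:ℝ))) := by
  have hm' : (1:ℝ) - m ≠ 0 := by linarith
  have hd' : (1 - m + m * (n:ℝ)) ≠ 0 := by
    intro h; apply hd; linarith [h]
  have hD : 1 - m * 2 + m * (n:ℝ) + (m ^ 2 - m ^ 2 * (n:ℝ)) ≠ 0 := by
    have h : 1 - m * 2 + m * (n:ℝ) + (m ^ 2 - m ^ 2 * (n:ℝ)) = (1-m)*(1+((n:ℝ)-1)*m) := by ring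
    rw [h]; exact mul_ne_zero hm' hd
  apply Matrix.inv_eq_right_inv
  ext i j
  simp only [Matrix.mul_apply, Matrix.add_apply, Matrix.smul_apply, Matrix.sub_apply,
    Matrix.one_apply, Matrix.of_apply, smul_eq_mul, sub_mul, mul_sub, add_mul, mul_add,
    ite_mul, mul_ite, mul_one, mul_zero, one_mul, zero_mul, Finset.sum_add_distrib,
    Finset.sum_sub_distrib, Finset.sum_ite_eq, Finset.sum_ite_eq', Finset.sum_const,
    Finset.mem_univ, if_true, Finset.card_univ, Fintype.card_fin, nsmul_eq_mul]
  by_cases h : i = j <;> simp [h]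
  · linear_combination mul_inv_cancel₀ hm' - (m*(1-m)⁻¹) * mul_inv_cancel₀ hd'
  · linear_combination (-(m*(1-m)⁻¹)) * mul_inv_cancel₀ hd'

lemma mf_mulVec {n : ℕ} {m : ℝ} (hm1 : m < 1) (hd : (1 + ((n:ℝ)-1)*m) ≠ 0)
    (K : Fin n → ℝ) (i : Fin n) :
    ((1 - m) • (1 : Matrix (Fin n) (Fin n) ℝ) + m • (Matrix.of fun _ _ => (1:ℝ)))⁻¹.mulVec K i
    = (K i - (m/(1 + ((n:ℝ)-1)*m)) * ∑ j, K j) / (1-m) := by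
  have hJ : ((Matrix.of fun _ _ => (1:ℝ)) : Matrix (Fin n) (Fin n) ℝ).mulVec K
      = fun _ => ∑ j, K j := by
    funext k; simp [Matrix.mulVec, dotProduct]
  rw [mf_inv hm1 hd, Matrix.smul_mulVec, Matrix.sub_mulVec, Matrix.one_mulVec,
    Matrix.smul_mulVec, hJ]
  simp only [Pi.smul_apply, Pi.sub_apply, smul_eq_mul]
  ring

/-- Mean-field feasibility: with `β(μ) = (1-μ)I + μJ`, `0 ≤ μ < 1`, a positive
carrying capacity vector `K` yields a strictly positive equilibrium `N* = β⁻¹K`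
iff `(1+(n-2)μ) K_i > μ Σ_{j≠i} K_j` for every `i`; small deviations from the
all-ones structural vector are feasible; and the feasible range shrinks as `μ`
increases towards 1. -/
theorem mean_field_feasibility {n : ℕ} (hn : 2 ≤ n) (μ : ℝ)
    (hμ0 : 0 ≤ μ) (hμ1 : μ < 1) :
    let betaOf : ℝ → Matrix (Fin n) (Fin n) ℝ := fun m =>
      (1 - m) • (1 : Matrix (Fin n) (Fin n) ℝ) + m • (Matrix.of fun _ _ => (1 : ℝ))
    (∀ K : Fin n → ℝ, (∀ i, 0 < K i) →
      ((∀ i, 0 < (betaOf μ)⁻¹.mulVec K i) ↔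
        ∀ i, μ * ∑ j ∈ Finset.univ.erase i, K j < (1 + ((n : ℝ) - 2) * μ) * K i)) ∧
    (∃ ε > 0, ∀ K : Fin n → ℝ, (∀ i, |K i - 1| < ε) →
      ∀ i, 0 < (betaOf μ)⁻¹.mulVec K i) ∧
    (∀ m m' : ℝ, 0 < m → m ≤ m' → m' < 1 → ∀ K : Fin n → ℝ, (∀ i, 0 < K i) →
      (∀ i, 0 < (betaOf m')⁻¹.mulVec K i) → ∀ i, 0 < (betaOf m)⁻¹.mulVec K i) := by
  intro betaOf
  have hn2 : (2:ℝ) ≤ (n:ℝ) := by exact_mod_cast hn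
  -- key characterization
  have key : ∀ m : ℝ, 0 ≤ m → m < 1 → ∀ K : Fin n → ℝ, ∀ i,
      (0 < (betaOf m)⁻¹.mulVec K i ↔
        m * ∑ j, K j < (1 + ((n:ℝ)-1)*m) * K i) := by
    intro m hm0 hm1 K i
    have hd0 : (0:ℝ) < 1 + ((n:ℝ)-1)*m := by nlinarith
    have h1m : (0:ℝ) < 1 - m := by linarith
    show (0:ℝ) < ((1 - m) • (1 : Matrix (Fin n) (Fin n) ℝ)
        + m • (Matrix.of fun _ _ => (1:ℝ)))⁻¹.mulVec K i ↔ _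
    rw [mf_mulVec hm1 (ne_of_gt hd0)]
    rw [lt_div_iff₀ h1m, zero_mul, sub_pos, div_mul_eq_mul_div, div_lt_iff₀ hd0]
    constructor <;> intro h <;> nlinarith
  refine ⟨?_, ?_, ?_⟩
  · intro K hK
    have hsum : ∀ i : Fin n, ∑ j, K j = K i + ∑ j ∈ Finset.univ.erase i, K j := by
      intro i
      rw [← Finset.add_sum_erase _ _ (Finset.mem_univ i)]
    constructor
    · intro h i
      have := (key μ hμ0 hμ1 K i).1 (h i)
      rw [hsum i] at this
      nlinarith
    · intro h i
      rw [key μ hμ0 hμ1 K i, hsum i]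
      have := h i
      nlinarith
  · have hn0 : (0:ℝ) < (n:ℝ) := by linarith
    refine ⟨(1-μ)/(2*n), div_pos (by linarith) (by linarith), ?_⟩
    intro K hK i
    rw [key μ hμ0 hμ1 K i]
    have hKi := abs_lt.1 (hK i)
    have hS : ∑ j, K j ≤ (n:ℝ) * (1 + (1-μ)/(2*n)) := by
      calc ∑ j, K j ≤ ∑ _j : Fin n, (1 + (1-μ)/(2*n)) := by
            apply Finset.sum_le_sum
            intro j _
            have := abs_lt.1 (hK j)
            linarith [this.2]
        _ = (n:ℝ) * (1 + (1-μ)/(2*n)) := by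
            rw [Finset.sum_const, Finset.card_univ, Fintype.card_fin, nsmul_eq_mul]
    have hne : (2*(n:ℝ)) ≠ 0 := by intro h; linarith
    have hε : (1-μ)/(2*n) * (2*(n:ℝ)) = 1 - μ := div_mul_cancel₀ _ hne
    have hμS : μ * ∑ j, K j ≤ μ * ((n:ℝ) * (1 + (1-μ)/(2*n))) :=
      mul_le_mul_of_nonneg_left hS hμ0
    have hε0 : 0 < (1-μ)/(2*(n:ℝ)) := div_pos (by linarith) (by linarith)
    have hA : (0:ℝ) < 1 + ((n:ℝ)-1)*μ := by nlinarith
    have h4 : (1 + ((n:ℝ)-1)*μ) * (1 - (1-μ)/(2*n)) ≤ (1 + ((n:ℝ)-1)*μ) * K i :=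
      mul_le_mul_of_nonneg_left (by linarith [hKi.1]) hA.le
    have h6' : μ * ((n:ℝ) * (2*n + (1-μ))) < (1 + ((n:ℝ)-1)*μ) * (2*n - (1-μ)) := by
      nlinarith [mul_pos (show (0:ℝ) < 2*(n:ℝ)-1 by linarith)
        (mul_pos (show (0:ℝ) < 1-μ by linarith) (show (0:ℝ) < 1-μ by linarith))]
    have h6 : μ * ((n:ℝ) * (1 + (1-μ)/(2*n))) < (1 + ((n:ℝ)-1)*μ) * (1 - (1-μ)/(2*n)) := by
      rw [← mul_lt_mul_iff_of_pos_right (show (0:ℝ) < 2*(n:ℝ) by linarith)]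
      have e1 : μ * ((n:ℝ) * (1 + (1-μ)/(2*n))) * (2*(n:ℝ)) = μ * ((n:ℝ) * (2*n + (1-μ))) := by
        field_simp
      have e2 : (1 + ((n:ℝ)-1)*μ) * (1 - (1-μ)/(2*n)) * (2*(n:ℝ))
          = (1 + ((n:ℝ)-1)*μ) * (2*n - (1-μ)) := by
        field_simp
      rw [e1, e2]; exact h6'
    linarith [hμS, h6, h4]
  · intro m m' hm0 hmm' hm1' K hK h' i
    have hm'0 : 0 ≤ m' := le_trans hm0.le hmm'
    have hm1 : m < 1 := lt_of_le_of_lt hmm' hm1'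
    have hS0 : 0 < ∑ j, K j := Finset.sum_pos (fun j _ => hK j) ⟨⟨0, by omega⟩, Finset.mem_univ _⟩
    have h1 := (key m' hm'0 hm1' K i).1 (h' i)
    rw [key m hm0.le hm1 K i]
    have hd0 : (0:ℝ) < 1 + ((n:ℝ)-1)*m := by nlinarith
    have hd0' : (0:ℝ) < 1 + ((n:ℝ)-1)*m' := by nlinarith
    -- m * S * d' ≤ m' * S * d < d' * K i * d
    have hmono : m * (∑ j, K j) * (1 + ((n:ℝ)-1)*m') ≤ m' * (∑ j, K j) * (1 + ((n:ℝ)-1)*m) := by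
      nlinarith [mul_nonneg (sub_nonneg.2 hmm') hS0.le]
    have h2 : m' * (∑ j, K j) * (1 + ((n:ℝ)-1)*m)
        < (1 + ((n:ℝ)-1)*m') * K i * (1 + ((n:ℝ)-1)*m) :=
      mul_lt_mul_of_pos_right h1 hd0
    have h3 : m * (∑ j, K j) * (1 + ((n:ℝ)-1)*m')
        < ((1 + ((n:ℝ)-1)*m) * K i) * (1 + ((n:ℝ)-1)*m') := by nlinarith
    exact lt_of_mul_lt_mul_right h3 hd0'.le
end
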